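/- In the Lie group SU(2) with Lie algebra basis E₁, E₂, E₃ satisfying [E₁,E₂]=E₃, [E₂,E₃]=E₁, [E₃,E₁]=E₂, the function f(ξ) := 2·arccos(cos²(ξ/2) + sin²(ξ/2)·cos ξ) is a strictly increasing bijection from [0, π] to [0, 2π]. -/
import Mathlib

open Real Set

private lemma g_eq (ξ : ℝ) :
    Real.cos (ξ / 2) ^ 2 + Real.sin (ξ / 2) ^ 2 * Real.cos ξ
      = 1 - (1 - Real.cos ξ) ^ 2 / 2 := by
  have hd := Real.sin_sq_add_cos_sq (ξ / 2)
  have ht : Real.cos ξ = 2 * Real.cos (ξ / 2) ^ 2 - 1 := by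
    have := Real.cos_two_mul (ξ / 2)
    rw [show 2 * (ξ / 2) = ξ by ring] at this
    exact this
  rw [ht]
  linear_combination (2 * Real.cos (ξ / 2) ^ 2 - 1) * hd

private lemma g_mem (ξ : ℝ) :
    1 - (1 - Real.cos ξ) ^ 2 / 2 ∈ Set.Icc (-1 : ℝ) 1 := by
  have h1 := Real.neg_one_le_cos ξ
  have h2 := Real.cos_le_one ξ
  constructor <;> nlinarith

private lemma g_anti : StrictAntiOn (fun ξ : ℝ => 1 - (1 - Real.cos ξ) ^ 2 / 2)
    (Set.Icc 0 Real.pi) := by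
  apply strictAntiOn_of_deriv_neg (convex_Icc _ _)
  · fun_prop
  · intro x hx
    rw [interior_Icc] at hx
    have h1 : HasDerivAt (fun ξ : ℝ => 1 - Real.cos ξ) (Real.sin x) x := by
      simpa using (Real.hasDerivAt_cos x).const_sub 1
    have h4 : HasDerivAt (fun ξ : ℝ => 1 - (1 - Real.cos ξ) ^ 2 / 2)
        (-(2 * (1 - Real.cos x) ^ 1 * Real.sin x / 2)) x :=
      ((h1.pow 2).div_const 2).const_sub 1
    rw [h4.deriv]
    have hs : 0 < Real.sin x := Real.sin_pos_of_pos_of_lt_pi hx.1 hx.2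
    have hc : Real.cos x < 1 := by
      have := Real.strictAntiOn_cos (Set.left_mem_Icc.mpr Real.pi_nonneg)
        ⟨hx.1.le, hx.2.le⟩ hx.1
      simpa using this
    nlinarith

theorem stmt_12 :
    StrictMonoOn
      (fun ξ : ℝ => 2 * Real.arccos (Real.cos (ξ / 2) ^ 2 + Real.sin (ξ / 2) ^ 2 * Real.cos ξ))
      (Set.Icc 0 Real.pi) ∧
    Set.BijOn
      (fun ξ : ℝ => 2 * Real.arccos (Real.cos (ξ / 2) ^ 2 + Real.sin (ξ / 2) ^ 2 * Real.cos ξ))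
      (Set.Icc 0 Real.pi) (Set.Icc 0 (2 * Real.pi)) := by
  set f := fun ξ : ℝ => 2 * Real.arccos (Real.cos (ξ / 2) ^ 2 + Real.sin (ξ / 2) ^ 2 * Real.cos ξ)
    with hf
  have hmono : StrictMonoOn f (Set.Icc 0 Real.pi) := by
    intro x hx y hy hxy
    simp only [hf, g_eq]
    have := Real.strictAntiOn_arccos (g_mem y) (g_mem x) (g_anti hx hy hxy)
    linarith
  have hf0 : f 0 = 0 := by
    simp [hf, g_eq]
  have hfpi : f Real.pi = 2 * Real.pi := by
    simp [hf, g_eq, Real.cos_pi]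
    norm_num [Real.arccos_neg_one]
  have hcont : ContinuousOn f (Set.Icc 0 Real.pi) := by
    apply Continuous.continuousOn
    exact continuous_const.mul (Real.continuous_arccos.comp (by fun_prop))
  refine ⟨hmono, ?_, hmono.injOn, ?_⟩
  · intro x hx
    have h1 := Real.arccos_nonneg (Real.cos (x / 2) ^ 2 + Real.sin (x / 2) ^ 2 * Real.cos x)
    have h2 := Real.arccos_le_pi (Real.cos (x / 2) ^ 2 + Real.sin (x / 2) ^ 2 * Real.cos x)
    constructor <;> simp only [hf] <;> linarith
  · intro y hy
    have := intermediate_value_Icc Real.pi_nonneg hcont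
    rw [hf0, hfpi] at this
    exact this hy
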